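/- A vector x* is an optimal solution of (P_δ) if and only if there exists y* ∈ ℝ^m with −Aᵀy* ∈ Sign(x*) and Ax* − b ∈ δ·Sign(y*), where Sign(x) := {ξ ∈ [−1,1]^n : x_j ≠ 0 ⇒ ξ_j = sign(x_j)} is the subdifferential of the ℓ₁-norm at x. -/

import Mathlib

open Finset Pointwise

noncomputable def l1 {n : ℕ} (x : Fin n → ℝ) : ℝ := ∑ j, |x j|

noncomputable def linf {m : ℕ} (x : Fin m → ℝ) : ℝ := ⨆ i, |x i|

def SignSet {n : ℕ} (x : Fin n → ℝ) : Set (Fin n → ℝ) :=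
  {ξ | (∀ j, |ξ j| ≤ 1) ∧ ∀ j, x j ≠ 0 → ξ j = Real.sign (x j)}

def Feas {m n : ℕ} (A : Matrix (Fin m) (Fin n) ℝ) (b : Fin m → ℝ) (δ : ℝ)
    (x : Fin n → ℝ) : Prop := linf (A.mulVec x - b) ≤ δ

def IsOpt {m n : ℕ} (A : Matrix (Fin m) (Fin n) ℝ) (b : Fin m → ℝ) (δ : ℝ)
    (x : Fin n → ℝ) : Prop := Feas A b δ x ∧ ∀ z, Feas A b δ z → l1 x ≤ l1 z

def DualCert {m n : ℕ} (A : Matrix (Fin m) (Fin n) ℝ) (b : Fin m → ℝ) (δ : ℝ)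
    (x : Fin n → ℝ) (y : Fin m → ℝ) : Prop :=
  (-(A.transpose.mulVec y) ∈ SignSet x) ∧ (A.mulVec x - b ∈ δ • SignSet y)


open scoped Classical

section Aux
variable {E : Type*} [NormedAddCommGroup E] [NormedSpace ℝ E]

def coneOf {k : ℕ} (v : Fin k → E) : Set E :=
  {x | ∃ l : Fin k → ℝ, (∀ i, 0 ≤ l i) ∧ ∑ i, l i • v i = x}

lemma isClosed_coneOf : ∀ {k : ℕ} (v : Fin k → E), IsClosed (coneOf v) := by
  intro k
  induction k with
  | zero =>
    intro v
    have : coneOf v = {0} := by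
      ext x
      constructor
      · rintro ⟨l, _, rfl⟩; simp
      · rintro rfl; exact ⟨0, fun i => le_refl _, by simp⟩
    rw [this]; exact isClosed_singleton
  | succ k ih =>
    intro v
    by_cases hv : LinearIndependent ℝ v
    · -- injective linear map case
      let L : (Fin (k+1) → ℝ) →ₗ[ℝ] E :=
        { toFun := fun l => ∑ i, l i • v i
          map_add' := by intro a b; simp [add_smul, Finset.sum_add_distrib]
          map_smul' := by intro c a; simp [smul_smul, Finset.smul_sum]
        }
      have hker : LinearMap.ker L = ⊥ := by
        rw [LinearMap.ker_eq_bot]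
        have h := Fintype.linearIndependent_iff.mp hv
        intro a b hab
        funext i
        have : ∑ j, (a - b) j • v j = 0 := by
          simp only [Pi.sub_apply, sub_smul, Finset.sum_sub_distrib]
          simpa [L, sub_eq_zero] using hab
        have := h _ this i
        simpa [sub_eq_zero] using this
      have hce := LinearMap.isClosedEmbedding_of_injective hker
      have hcl : IsClosed {l : Fin (k+1) → ℝ | ∀ i, 0 ≤ l i} := by
        have : {l : Fin (k+1) → ℝ | ∀ i, 0 ≤ l i} = ⋂ i, (fun l : Fin (k+1) → ℝ => l i) ⁻¹' Set.Ici 0 := by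
          ext l; simp [Set.mem_iInter]
        rw [this]
        exact isClosed_iInter fun i => isClosed_Ici.preimage (continuous_apply i)
      have : coneOf v = L '' {l | ∀ i, 0 ≤ l i} := by
        ext x
        simp only [coneOf, Set.mem_image, Set.mem_setOf_eq]
        constructor
        · rintro ⟨l, hl, rfl⟩; exact ⟨l, hl, rfl⟩
        · rintro ⟨l, hl, rfl⟩; exact ⟨l, hl, rfl⟩
      rw [this]
      exact hce.isClosedMap _ hcl
    · -- dependent case
      obtain ⟨c, hc0, i0, hi0⟩ := Fintype.not_linearIndependent_iff.mp hv
      -- wlog some positive entry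
      have key : ∀ c : Fin (k+1) → ℝ, (∑ i, c i • v i = 0) → (∃ i, 0 < c i) →
          coneOf v ⊆ ⋃ i ∈ Finset.univ.filter (fun i => 0 < c i), coneOf (v ∘ i.succAbove) := by
        intro c hcsum ⟨ip, hip⟩ x ⟨l, hl, hlx⟩
        have hne : (Finset.univ.filter (fun i => 0 < c i)).Nonempty := ⟨ip, by simp [hip]⟩
        obtain ⟨j0, hj0mem, hj0min⟩ := Finset.exists_min_image _ (fun i => l i / c i) hne
        have hcj0 : 0 < c j0 := (Finset.mem_filter.mp hj0mem).2
        set t := l j0 / c j0 with ht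
        have ht0 : 0 ≤ t := div_nonneg (hl j0) hcj0.le
        set μ : Fin (k+1) → ℝ := fun i => l i - t * c i with hμ
        have hμ0 : ∀ i, 0 ≤ μ i := by
          intro i
          by_cases hci : 0 < c i
          · have := hj0min i (Finset.mem_filter.mpr ⟨Finset.mem_univ _, hci⟩)
            have : t * c i ≤ l i := by
              rw [ht] at this ⊢
              calc l j0 / c j0 * c i ≤ l i / c i * c i := by
                    exact mul_le_mul_of_nonneg_right this hci.le
                _ = l i := div_mul_cancel₀ _ hci.ne'
            show 0 ≤ l i - t * c i
            linarith [this]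
          · push_neg at hci
            have : t * c i ≤ 0 := mul_nonpos_iff.mpr (Or.inl ⟨ht0, hci⟩)
            have := hl i
            show 0 ≤ l i - t * c i
            linarith
        have hμj0 : μ j0 = 0 := by
          simp only [hμ, ht]
          field_simp
          simp
        have hμsum : ∑ i, μ i • v i = x := by
          simp only [hμ, sub_smul, mul_smul, Finset.sum_sub_distrib, ← Finset.smul_sum, hcsum,
            smul_zero, sub_zero, hlx]
        refine Set.mem_iUnion₂.mpr ⟨j0, hj0mem, ?_⟩
        refine ⟨fun j => μ (j0.succAbove j), fun j => hμ0 _, ?_⟩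
        have h1 := Fin.sum_univ_succAbove (fun i => μ i • v i) j0
        rw [hμj0] at h1
        simp only [zero_smul, zero_add] at h1
        have h2 := h1.symm.trans hμsum
        simpa [Function.comp] using h2
      have sub : ∀ (i : Fin (k+1)), coneOf (v ∘ i.succAbove) ⊆ coneOf v := by
        intro i x ⟨l, hl, hlx⟩
        refine ⟨(i.insertNth (0:ℝ) l : Fin (k+1) → ℝ), ?_, ?_⟩
        · intro j
          rcases eq_or_ne j i with rfl | hji
          · simp
          · obtain ⟨j', rfl⟩ := Fin.exists_succAbove_eq hji
            simp [hl j']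
        · rw [Fin.sum_univ_succAbove (fun j => (i.insertNth (0:ℝ) l : Fin (k+1) → ℝ) j • v j) i]
          simpa using hlx
      -- choose c with positive entry
      have hpos : (∃ i, 0 < c i) ∨ (∃ i, 0 < (-c) i) := by
        rcases lt_trichotomy (c i0) 0 with h | h | h
        · right; exact ⟨i0, by simpa using h⟩
        · exact absurd h hi0
        · left; exact ⟨i0, h⟩
      have hcsum' : ∑ i, (-c) i • v i = 0 := by
        simp [neg_smul, Finset.sum_neg_distrib, hc0]
      rcases hpos with h | h
      · have heq : coneOf v = ⋃ i ∈ Finset.univ.filter (fun i => 0 < c i), coneOf (v ∘ i.succAbove) :=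
          le_antisymm (key c hc0 h) (Set.iUnion₂_subset fun i _ => sub i)
        rw [heq]
        exact Set.Finite.isClosed_biUnion (Set.toFinite _) (fun i _ => ih _)
      · have heq : coneOf v = ⋃ i ∈ Finset.univ.filter (fun i => 0 < (-c) i), coneOf (v ∘ i.succAbove) :=
          le_antisymm (key (-c) hcsum' h) (Set.iUnion₂_subset fun i _ => sub i)
        rw [heq]
        exact Set.Finite.isClosed_biUnion (Set.toFinite _) (fun i _ => ih _)

end Aux

section FarkasSection
variable {E : Type*} [NormedAddCommGroup E] [InnerProductSpace ℝ E] [CompleteSpace E]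

lemma farkasFin {k : ℕ} (v : Fin k → E) (c : E)
    (h : ∀ w : E, (∀ i, inner ℝ (v i) w ≤ (0:ℝ)) → inner ℝ c w ≤ (0:ℝ)) :
    ∃ l : Fin k → ℝ, (∀ i, 0 ≤ l i) ∧ ∑ i, l i • v i = c := by
  by_contra hc
  have hcK : c ∉ coneOf v := hc
  let K : ConvexCone ℝ E :=
    { carrier := coneOf v
      smul_mem' := by
        rintro r hr x ⟨l, hl, rfl⟩
        exact ⟨fun i => r * l i, fun i => mul_nonneg hr.le (hl i), by
          simp [mul_smul, Finset.smul_sum]⟩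
      add_mem' := by
        rintro x ⟨l, hl, rfl⟩ y ⟨l', hl', rfl⟩
        exact ⟨fun i => l i + l' i, fun i => add_nonneg (hl i) (hl' i), by
          simp [add_smul, Finset.sum_add_distrib]⟩ }
  have hK0 : (0:E) ∈ K := ⟨0, fun i => le_refl _, by simp⟩
  obtain ⟨y, hy1, hy2⟩ := ProperCone.hyperplane_separation'
    (⟨K.toPointedCone hK0, isClosed_coneOf v⟩ : ProperCone ℝ E) hcK
  have hvy : ∀ i, inner ℝ (v i) (-y) ≤ (0:ℝ) := by
    intro i
    have : (v i) ∈ K := ⟨fun j => if j = i then 1 else 0, fun j => by positivity, by simp⟩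
    have := hy1 _ this
    rw [inner_neg_right]
    linarith
  have := h (-y) hvy
  rw [inner_neg_right] at this
  linarith

lemma farkas {ι : Type*} [Fintype ι] (v : ι → E) (c : E)
    (h : ∀ w : E, (∀ i, inner ℝ (v i) w ≤ (0:ℝ)) → inner ℝ c w ≤ (0:ℝ)) :
    ∃ l : ι → ℝ, (∀ i, 0 ≤ l i) ∧ ∑ i, l i • v i = c := by
  obtain ⟨l, hl, hsum⟩ := farkasFin (v ∘ (Fintype.equivFin ι).symm) c
    (fun w hw => h w fun i => by simpa using hw ((Fintype.equivFin ι) i))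
  refine ⟨l ∘ (Fintype.equivFin ι), fun i => hl _, ?_⟩
  rw [← hsum]
  exact Fintype.sum_equiv (Fintype.equivFin ι) _ _ (fun q => by simp)

end FarkasSection

lemma linf_coord {m : ℕ} (v : Fin m → ℝ) (i : Fin m) : |v i| ≤ linf v :=
  le_ciSup (f := fun i => |v i|) (Set.Finite.bddAbove (Set.finite_range _)) i

lemma linf_le {m : ℕ} {v : Fin m → ℝ} {δ : ℝ} (hδ : 0 ≤ δ) (h : ∀ i, |v i| ≤ δ) :
    linf v ≤ δ := by
  rcases isEmpty_or_nonempty (Fin m) with hm | hm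
  · rw [linf, Real.iSup_of_isEmpty]; exact hδ
  · exact ciSup_le h

lemma eventual (u c bound : ℝ) (h : u ≤ bound) (h2 : u = bound → c ≤ 0) :
    ∃ e : ℝ, 0 < e ∧ ∀ ε : ℝ, 0 < ε → ε ≤ e → u + ε * c ≤ bound := by
  rcases eq_or_lt_of_le h with heq | hlt
  · exact ⟨1, one_pos, fun ε hε1 hε2 => by nlinarith [h2 heq]⟩
  · have hM : (0:ℝ) < max c 1 := lt_of_lt_of_le one_pos (le_max_right _ _)
    refine ⟨(bound - u) / (max c 1), div_pos (sub_pos.mpr hlt) hM, fun ε hε1 hε2 => ?_⟩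
    have h3 : ε * max c 1 ≤ bound - u := by
      have := mul_le_mul_of_nonneg_right hε2 hM.le
      rwa [div_mul_cancel₀ _ hM.ne'] at this
    nlinarith [le_max_left c 1]

lemma exists_pos_forall {ι : Type*} [Fintype ι] (P : ι → ℝ → Prop)
    (h : ∀ q, ∃ e, 0 < e ∧ ∀ ε, 0 < ε → ε ≤ e → P q ε) :
    ∃ ε : ℝ, 0 < ε ∧ ∀ q, P q ε := by
  choose e he hP using h
  rcases isEmpty_or_nonempty ι with hι | hι
  · exact ⟨1, one_pos, fun q => (hι.false q).elim⟩
  · have hne : (Finset.univ : Finset ι).Nonempty := Finset.univ_nonempty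
    have hεpos : 0 < min 1 (Finset.univ.inf' hne e) :=
      lt_min one_pos ((Finset.lt_inf'_iff hne).mpr fun q _ => he q)
    exact ⟨min 1 (Finset.univ.inf' hne e), hεpos, fun q =>
      hP q _ hεpos ((min_le_right _ _).trans (Finset.inf'_le e (Finset.mem_univ q)))⟩

lemma real_sign_mul_self {a : ℝ} (h : a ≠ 0) : Real.sign a * a = |a| := by
  rcases h.lt_or_gt with h1 | h1
  · rw [Real.sign_of_neg h1, abs_of_neg h1]; ring
  · rw [Real.sign_of_pos h1, abs_of_pos h1]; ring

lemma dot_swap {m n : ℕ} (A : Matrix (Fin m) (Fin n) ℝ) (y : Fin m → ℝ) (z : Fin n → ℝ) :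
    ∑ j, (A.transpose.mulVec y) j * z j = ∑ i, y i * (A.mulVec z) i := by
  calc ∑ j, (A.transpose.mulVec y) j * z j = ∑ j, ∑ i, A i j * y i * z j := by
        apply Finset.sum_congr rfl
        intro j _
        rw [Matrix.mulVec, dotProduct, Finset.sum_mul]
        rfl
    _ = ∑ i, ∑ j, A i j * y i * z j := Finset.sum_comm
    _ = ∑ i, y i * (A.mulVec z) i := by
        apply Finset.sum_congr rfl
        intro i _
        rw [Matrix.mulVec, dotProduct, Finset.mul_sum]
        apply Finset.sum_congr rfl
        intro j _
        ring

lemma sufficiency {m n : ℕ} (A : Matrix (Fin m) (Fin n) ℝ)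
    (b : Fin m → ℝ) (δ : ℝ) (hδ : 0 ≤ δ) (x : Fin n → ℝ) (y : Fin m → ℝ)
    (hcert : DualCert A b δ x y) : IsOpt A b δ x := by
  obtain ⟨⟨hb1, hb2⟩, hmem⟩ := hcert
  obtain ⟨η, ⟨hη1, hη2⟩, hηeq⟩ := Set.mem_smul_set.mp hmem
  have hcoord : ∀ i, (A.mulVec x - b) i = δ * η i := by
    intro i; rw [← hηeq]; rfl
  have hfeas : Feas A b δ x := by
    apply linf_le hδ
    intro i
    rw [hcoord i, abs_mul, abs_of_nonneg hδ]
    exact mul_le_of_le_one_right hδ (hη1 i)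
  refine ⟨hfeas, fun z hz => ?_⟩
  -- ξ := -(Aᵀ y)
  have hswap : ∀ z : Fin n → ℝ, ∑ j, (-(A.transpose.mulVec y)) j * z j
      = -(∑ i, y i * ((A.mulVec z - b) i)) - ∑ i, y i * b i := by
    intro z
    have h1 := dot_swap A y z
    have h2 : ∑ j, (-(A.transpose.mulVec y)) j * z j = -∑ j, (A.transpose.mulVec y) j * z j := by
      rw [← Finset.sum_neg_distrib]
      apply Finset.sum_congr rfl
      intro j _
      rw [Pi.neg_apply]; ring
    have h3 : ∑ i, y i * ((A.mulVec z - b) i) = ∑ i, y i * (A.mulVec z) i - ∑ i, y i * b i := by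
      rw [← Finset.sum_sub_distrib]
      apply Finset.sum_congr rfl
      intro i _
      rw [Pi.sub_apply]; ring
    rw [h2, h1, h3]
    ring
  have lemX : ∑ j, (-(A.transpose.mulVec y)) j * x j = l1 x := by
    rw [l1]
    apply Finset.sum_congr rfl
    intro j _
    by_cases hxj : x j = 0
    · simp [hxj]
    · rw [hb2 j hxj, real_sign_mul_self hxj]
  have lemY : ∑ i, y i * ((A.mulVec x - b) i) = δ * ∑ i, |y i| := by
    rw [Finset.mul_sum]
    apply Finset.sum_congr rfl
    intro i _
    rw [hcoord i]
    by_cases hyi : y i = 0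
    · simp [hyi]
    · rw [hη2 i hyi]
      have := real_sign_mul_self hyi
      nlinarith [real_sign_mul_self hyi]
  have lemA : ∑ j, (-(A.transpose.mulVec y)) j * z j ≤ l1 z := by
    rw [l1]
    apply Finset.sum_le_sum
    intro j _
    calc (-(A.transpose.mulVec y)) j * z j ≤ |(-(A.transpose.mulVec y)) j * z j| := le_abs_self _
      _ = |(-(A.transpose.mulVec y)) j| * |z j| := abs_mul _ _
      _ ≤ 1 * |z j| := mul_le_mul_of_nonneg_right (hb1 j) (abs_nonneg _)
      _ = |z j| := one_mul _
  have lemZ : ∑ i, y i * ((A.mulVec z - b) i) ≤ δ * ∑ i, |y i| := by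
    rw [Finset.mul_sum]
    apply Finset.sum_le_sum
    intro i _
    have h1 : |(A.mulVec z - b) i| ≤ δ := (linf_coord _ i).trans hz
    have h2 : |y i * ((A.mulVec z - b) i)| ≤ |y i| * δ := by
      rw [abs_mul]
      exact mul_le_mul_of_nonneg_left h1 (abs_nonneg _)
    have h3 := le_abs_self (y i * ((A.mulVec z - b) i))
    nlinarith
  have hx : l1 x = -(δ * ∑ i, |y i|) - ∑ i, y i * b i := by
    rw [← lemX, hswap x, lemY]
  have hzge : l1 z ≥ -(δ * ∑ i, |y i|) - ∑ i, y i * b i := by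
    have := hswap z
    linarith [lemA, lemZ]
  linarith

lemma abs_sign_le_one (t : ℝ) : |Real.sign t| ≤ 1 := by
  rcases lt_trichotomy t 0 with h|h|h
  · simp [Real.sign_of_neg h]
  · simp [h, Real.sign_zero]
  · simp [Real.sign_of_pos h]


lemma necessity {m n : ℕ} (A : Matrix (Fin m) (Fin n) ℝ)
    (b : Fin m → ℝ) (δ : ℝ) (hδ : 0 ≤ δ) (x : Fin n → ℝ) (hopt : IsOpt A b δ x) :
    ∃ y : Fin m → ℝ, DualCert A b δ x y := by
  obtain ⟨hfeas, hmin⟩ := hopt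
  set r : Fin m → ℝ := A.mulVec x - b with hr
  set sg : (Fin n ⊕ Fin n) → EuclideanSpace ℝ (Fin n ⊕ Fin n) :=
    fun p => EuclideanSpace.single p 1 with hsg
  set g : ((Fin n ⊕ Fin n) ⊕ (Fin m ⊕ Fin m)) → EuclideanSpace ℝ (Fin n ⊕ Fin n) := Sum.elim
      (Sum.elim (fun j => sg (.inl j) - sg (.inr j)) (fun j => -sg (.inl j) - sg (.inr j)))
      (Sum.elim (fun i => ∑ j, A i j • sg (.inl j)) (fun i => -∑ j, A i j • sg (.inl j)))
    with hg
  set u : ((Fin n ⊕ Fin n) ⊕ (Fin m ⊕ Fin m)) → ℝ := Sum.elim (Sum.elim (fun j => x j) (fun j => -x j))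
      (Sum.elim (fun i => r i) (fun i => -r i)) with hu
  set bd : ((Fin n ⊕ Fin n) ⊕ (Fin m ⊕ Fin m)) → ℝ := Sum.elim (Sum.elim (fun j => |x j|) (fun j => |x j|)) (fun _ => δ) with hbd
  set g' : ((Fin n ⊕ Fin n) ⊕ (Fin m ⊕ Fin m)) → EuclideanSpace ℝ (Fin n ⊕ Fin n) :=
    fun q => if u q = bd q then g q else 0 with hg'
  set cn : EuclideanSpace ℝ (Fin n ⊕ Fin n) := -∑ j, sg (.inr j) with hcn
  have hub : ∀ q, u q ≤ bd q := by
    rintro ((j | j) | (i | i))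
    · exact le_abs_self _
    · exact neg_le_abs _
    · exact (abs_le.mp ((linf_coord r i).trans hfeas)).2
    · simpa [hu, hbd] using neg_le_neg (abs_le.mp ((linf_coord r i).trans hfeas)).1
  -- the Farkas premise
  have hpremise : ∀ w : EuclideanSpace ℝ (Fin n ⊕ Fin n), (∀ q, inner ℝ (g' q) w ≤ (0:ℝ)) → inner ℝ cn w ≤ (0:ℝ) := by
    intro w hw
    set dz : Fin n → ℝ := fun j => inner ℝ (sg (.inl j)) w with hdz
    set dt : Fin n → ℝ := fun j => inner ℝ (sg (.inr j)) w with hdt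
    set s : Fin m → ℝ := A.mulVec dz with hs
    have hinner : ∀ q, (inner ℝ (g q) w : ℝ) =
        Sum.elim (Sum.elim (fun j => dz j - dt j) (fun j => -dz j - dt j))
          (Sum.elim (fun i => s i) (fun i => -s i)) q := by
      rintro ((j | j) | (i | i)) <;>
        simp only [hg, Sum.elim_inl, Sum.elim_inr, inner_sub_left, inner_neg_left, sum_inner,
          real_inner_smul_left, hs, hdz, hdt, Matrix.mulVec, dotProduct, neg_neg,
          starRingEnd_apply, star_trivial] <;> ring
    set cc : ((Fin n ⊕ Fin n) ⊕ (Fin m ⊕ Fin m)) → ℝ := Sum.elim (Sum.elim (fun j => dz j - dt j) (fun j => -dz j - dt j))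
        (Sum.elim (fun i => s i) (fun i => -s i)) with hcc
    have hccle : ∀ q, u q = bd q → cc q ≤ 0 := by
      intro q hq
      have h0 : inner ℝ (g q) w ≤ (0:ℝ) := by simpa [hg', hq] using hw q
      rw [hinner q] at h0
      exact h0
    obtain ⟨ε, hε, hcond⟩ := exists_pos_forall (fun q ε => u q + ε * cc q ≤ bd q)
      (fun q => eventual _ _ _ (hub q) (hccle q))
    -- z is feasible
    have hz : Feas A b δ (x + ε • dz) := by
      apply linf_le hδ
      intro i
      have h1 : (A.mulVec (x + ε • dz) - b) i = r i + ε * s i := by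
        simp [Matrix.mulVec_add, Matrix.mulVec_smul, hr, hs]
        ring
      rw [h1]
      have c1 := hcond (.inr (.inl i))
      have c2 := hcond (.inr (.inr i))
      simp only [hu, hbd, hcc, Sum.elim_inr, Sum.elim_inl] at c1 c2
      rw [abs_le]; constructor <;> linarith
    have hl1 := hmin _ hz
    have hl1z : l1 (x + ε • dz) ≤ l1 x + ε * ∑ j, dt j := by
      rw [l1, l1, Finset.mul_sum, ← Finset.sum_add_distrib]
      apply Finset.sum_le_sum
      intro j _
      have c1 := hcond (.inl (.inl j))
      have c2 := hcond (.inl (.inr j))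
      simp only [hu, hbd, hcc, Sum.elim_inl, Sum.elim_inr] at c1 c2
      have h2 : (x + ε • dz) j = x j + ε * dz j := rfl
      rw [h2, abs_le]
      constructor <;> linarith
    have hdtnn : 0 ≤ ∑ j, dt j := nonneg_of_mul_nonneg_right (by linarith) hε
    have : (inner ℝ cn w : ℝ) = -∑ j, dt j := by
      simp [hcn, inner_neg_left, sum_inner, hdt]
    rw [this]
    linarith
  obtain ⟨l, hl, hsum⟩ := farkas g' cn hpremise
  set L : ((Fin n ⊕ Fin n) ⊕ (Fin m ⊕ Fin m)) → ℝ := fun q => if u q = bd q then l q else 0 with hL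
  have hLnn : ∀ q, 0 ≤ L q := by
    intro q; rw [hL]; dsimp only; split_ifs; exacts [hl q, le_refl _]
  have hLz : ∀ q, ¬(u q = bd q) → L q = 0 := by
    intro q hq; rw [hL]; dsimp only; rw [if_neg hq]
  have hLsum : ∑ q, L q • g q = cn := by
    rw [← hsum]
    apply Finset.sum_congr rfl
    intro q _
    rw [hL, hg']; dsimp only; split_ifs <;> simp
  set α : Fin n → ℝ := fun j => L (.inl (.inl j)) with hα
  set β : Fin n → ℝ := fun j => L (.inl (.inr j)) with hβ
  set P : Fin m → ℝ := fun i => L (.inr (.inl i)) with hP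
  set Q : Fin m → ℝ := fun i => L (.inr (.inr i)) with hQ
  set y : Fin m → ℝ := fun i => P i - Q i with hy
  have key : ∀ p : Fin n ⊕ Fin n, ∑ q, L q * (inner ℝ (g q) (sg p) : ℝ) = inner ℝ cn (sg p) := by
    intro p
    rw [← hLsum, sum_inner]
    apply Finset.sum_congr rfl
    intro q _
    rw [real_inner_smul_left]
  have hsgsg : ∀ p p' : Fin n ⊕ Fin n, (inner ℝ (sg p) (sg p') : ℝ) = if p' = p then 1 else 0 := by
    intro p p'
    simp [hsg, EuclideanSpace.inner_single_left, EuclideanSpace.single_apply, eq_comm]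
  have eq1 : ∀ j, α j - β j + (∑ i, P i * A i j - ∑ i, Q i * A i j) = 0 := by
    intro j
    have hk := key (.inl j)
    rw [Fintype.sum_sum_type, Fintype.sum_sum_type, Fintype.sum_sum_type] at hk
    simp only [hg, hcn, Sum.elim_inl, Sum.elim_inr, inner_sub_left, inner_neg_left, sum_inner,
      real_inner_smul_left, starRingEnd_apply, star_trivial, hsgsg, Sum.inl.injEq,
      Sum.inr.injEq, reduceCtorEq, if_false, mul_ite, ite_mul, mul_one, mul_zero, one_mul,
      zero_mul, mul_neg, neg_zero, Finset.sum_ite_eq, Finset.sum_ite_eq', Finset.mem_univ,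
      if_true, sub_zero, zero_sub, Finset.sum_neg_distrib, Finset.sum_const_zero, neg_neg,
      add_zero, zero_add] at hk
    exact hk
  have eq2 : ∀ j, α j + β j = 1 := by
    intro j
    have hk := key (.inr j)
    rw [Fintype.sum_sum_type, Fintype.sum_sum_type, Fintype.sum_sum_type] at hk
    simp only [hg, hcn, Sum.elim_inl, Sum.elim_inr, inner_sub_left, inner_neg_left, sum_inner,
      real_inner_smul_left, starRingEnd_apply, star_trivial, hsgsg, Sum.inl.injEq,
      Sum.inr.injEq, reduceCtorEq, if_false, mul_ite, ite_mul, mul_one, mul_zero, one_mul,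
      zero_mul, mul_neg, neg_zero, Finset.sum_ite_eq, Finset.sum_ite_eq', Finset.mem_univ,
      if_true, sub_zero, zero_sub, Finset.sum_neg_distrib, Finset.sum_const_zero, neg_neg,
      add_zero, zero_add] at hk
    linarith [hk]
  have habs : ∀ i, |r i| ≤ δ := fun i => (linf_coord r i).trans hfeas
  have hξ : ∀ j, (-(A.transpose.mulVec y)) j = α j - β j := by
    intro j
    have h1 : (A.transpose.mulVec y) j = ∑ i, A i j * y i := by
      simp [Matrix.mulVec, dotProduct, Matrix.transpose_apply]
    have h2 : ∑ i, A i j * y i = ∑ i, P i * A i j - ∑ i, Q i * A i j := by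
      rw [← Finset.sum_sub_distrib]
      apply Finset.sum_congr rfl
      intro i _
      simp only [hy]
      ring
    rw [Pi.neg_apply, h1, h2]
    linarith [eq1 j]
  refine ⟨y, ⟨fun j => ?_, fun j hj => ?_⟩, ?_⟩
  · -- bound on ξ
    rw [hξ j, abs_le]
    have h1 := hLnn (.inl (.inl j))
    have h2 := hLnn (.inl (.inr j))
    constructor <;> [linarith [eq2 j]; linarith [eq2 j]]
  · -- sign condition
    rcases hj.lt_or_gt with hneg | hpos
    · have hα0 : α j = 0 := by
        apply hLz
        simp only [hu, hbd, Sum.elim_inl]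
        intro hcontra
        rw [abs_of_neg hneg] at hcontra
        linarith
      rw [hξ j, hα0, Real.sign_of_neg hneg]
      have := eq2 j
      linarith
    · have hβ0 : β j = 0 := by
        apply hLz
        simp only [hu, hbd, Sum.elim_inl, Sum.elim_inr]
        intro hcontra
        rw [abs_of_pos hpos] at hcontra
        linarith
      rw [hξ j, hβ0, Real.sign_of_pos hpos]
      have := eq2 j
      linarith
  · -- second condition
    rcases eq_or_lt_of_le hδ with hδ0 | hδpos
    · -- δ = 0
      have hr0 : ∀ i, r i = 0 := by
        intro i
        have := habs i
        rw [← hδ0] at this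
        have := abs_nonneg (r i)
        linarith [abs_le.mp ((habs i))]
        -- fallback
      rw [Set.mem_smul_set]
      refine ⟨fun i => Real.sign (y i), ⟨fun i => abs_sign_le_one _, fun i _ => rfl⟩, ?_⟩
      funext i
      have : (A.mulVec x - b) i = r i := rfl
      rw [← hδ0]
      simp [this, hr0 i]
    · -- δ > 0
      rw [Set.mem_smul_set]
      refine ⟨fun i => r i / δ, ⟨fun i => ?_, fun i hyi => ?_⟩, ?_⟩
      · rw [abs_div, abs_of_pos hδpos, div_le_one hδpos]
        exact habs i
      · -- sign condition for y
        have hyP : P i ≠ 0 ∨ Q i ≠ 0 := by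
          by_contra hcon
          push_neg at hcon
          apply hyi
          simp [hy, hcon.1, hcon.2]
        rcases hyP with hP0 | hQ0
        · have hact : r i = δ := by
            by_contra hcontra
            exact hP0 (hLz _ (by simp only [hu, hbd, Sum.elim_inr, Sum.elim_inl]; exact hcontra))
          have hQz : Q i = 0 := by
            by_contra hQc
            have : -r i = δ := by
              by_contra hc2
              exact hQc (hLz _ (by simp only [hu, hbd, Sum.elim_inr]; exact hc2))
            linarith
          have hyval : y i = P i := by simp [hy, hQz]
          have hypos : 0 < y i := by
            rw [hyval]
            exact lt_of_le_of_ne (hLnn _) (Ne.symm hP0)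
          rw [Real.sign_of_pos hypos]
          show r i / δ = 1
          rw [hact, div_self hδpos.ne']
        · have hact : r i = -δ := by
            by_contra hcontra
            have : ¬(-r i = δ) := fun hc => hcontra (by linarith)
            exact hQ0 (hLz _ (by simp only [hu, hbd, Sum.elim_inr]; exact this))
          have hPz : P i = 0 := by
            by_contra hPc
            have : r i = δ := by
              by_contra hc2
              exact hPc (hLz _ (by simp only [hu, hbd, Sum.elim_inr, Sum.elim_inl]; exact hc2))
            linarith
          have hyneg : y i < 0 := by
            have : y i = -Q i := by simp [hy, hPz]
            rw [this]
            simp only [neg_neg, Left.neg_neg_iff]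
            exact lt_of_le_of_ne (hLnn _) (Ne.symm hQ0)
          rw [Real.sign_of_neg hyneg]
          show r i / δ = -1
          rw [hact]
          field_simp
      · funext i
        have : (A.mulVec x - b) i = r i := rfl
        simp [this, Pi.smul_apply, smul_eq_mul]
        field_simp

theorem optimality_iff_dual_certificate {m n : ℕ} (A : Matrix (Fin m) (Fin n) ℝ)
    (b : Fin m → ℝ) (δ : ℝ) (hδ : 0 ≤ δ) (x : Fin n → ℝ) :
    IsOpt A b δ x ↔ ∃ y : Fin m → ℝ, DualCert A b δ x y := by
  constructor
  · exact fun h => necessity A b δ hδ x h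
  · rintro ⟨y, hy⟩
    exact sufficiency A b δ hδ x y hy
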